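/- arXiv:2505.07029 — 5 statements merged into one kernel-verified Lean document; each statement's English description precedes it below -/
import Mathlib

section
/- Let Σ_YY be an m×m positive definite real matrix, σ² > 0 with Σ_YY − σ²·I positive semidefinite, and λ ≥ 1. Then the function φ : [0,∞)ᵐ → ℝ given by φ(v) = (1/2)(1−λ)·log det(Σ_YY + D(v)) − (1/2)·log det(σ²·I + D(v)) + (λ/2)·(log det Σ_YY + tr(Σ_YY⁻¹ D(v))), where D(v) = diag(v₁,…,v_m), is convex in each coordinate v_i (the other coordinates held fixed). -/
open Matrix Real Set

lemma aux_convex (a b c : ℝ) (ha : 0 < a) (hb : 0 ≤ b) (hc : c ≤ 0) :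
    ConvexOn ℝ (Set.Ici (0:ℝ)) (fun t : ℝ => c * Real.log (a + b * t)) := by
  have hlog : ConcaveOn ℝ (Set.Ici (0:ℝ)) (fun t : ℝ => Real.log (a + b * t)) := by
    have h1 : ConcaveOn ℝ (Ioi (0:ℝ)) Real.log := strictConcaveOn_log_Ioi.concaveOn
    let g : ℝ →ᵃ[ℝ] ℝ := AffineMap.const ℝ ℝ a + (b • LinearMap.id (R := ℝ) (M := ℝ)).toAffineMap
    have hg : ∀ t, g t = a + b * t := fun t => rfl
    have h2 := h1.comp_affineMap g
    have h3 : Set.Ici (0:ℝ) ⊆ g ⁻¹' (Ioi 0) := by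
      intro t ht
      simp only [Set.mem_preimage, Set.mem_Ioi, hg]
      nlinarith [Set.mem_Ici.mp ht]
    exact h2.subset h3 (convex_Ici 0)
  have := (hlog.smul (c := -c) (by linarith)).neg
  convert this using 2 with t
  · rfl
  · rfl
  · rfl
  simp only [Pi.neg_apply, smul_eq_mul]
  ring

lemma aux_affine (e d : ℝ) : ConvexOn ℝ (Set.Ici (0:ℝ)) (fun t : ℝ => e + d * t) := by
  refine ⟨convex_Ici 0, ?_⟩
  intro x _ y _ a b _ _ hab
  simp only [smul_eq_mul]
  exact le_of_eq (by linear_combination (-e) * hab)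

lemma aux_diag_pos {m : ℕ} {M : Matrix (Fin m) (Fin m) ℝ} (hM : M.PosDef) (i : Fin m) :
    0 < M i i := by
  have := hM.diag_pos (i := i)
  simpa using this

lemma aux_det_affine {m : ℕ} (M : Matrix (Fin m) (Fin m) ℝ) (i : Fin m) (t : ℝ) :
    (M + t • Matrix.diagonal (Pi.single i 1)).det = M.det + t * (M.adjugate i i) := by
  have h : M + t • Matrix.diagonal (Pi.single i 1)
      = M.updateRow i (M i + t • (Pi.single i (1:ℝ) : Fin m → ℝ)) := by
    ext j k
    by_cases hj : j = i
    · subst hj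
      simp [Matrix.updateRow_self, Matrix.diagonal, Pi.single_apply, eq_comm]
    · simp [Matrix.updateRow_ne hj, Matrix.diagonal, Pi.single_apply, hj]
  rw [h, Matrix.det_updateRow_add, Matrix.det_updateRow_smul, Matrix.updateRow_eq_self,
    Matrix.adjugate_apply]

lemma aux_adj_nonneg {m : ℕ} {M : Matrix (Fin m) (Fin m) ℝ} (hM : M.PosDef) (i : Fin m) :
    0 ≤ M.adjugate i i := by
  have hdet : 0 < M.det := hM.det_pos
  have hinv : 0 < M⁻¹ i i := aux_diag_pos hM.inv i
  have h1 : M⁻¹ i i = (M.det)⁻¹ * M.adjugate i i := by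
    rw [Matrix.inv_def]; simp [Ring.inverse_eq_inv]
  have h2 : M.adjugate i i = M.det * M⁻¹ i i := by
    rw [h1]; field_simp
  rw [h2]; positivity

/-- Convexity in each coordinate of the game-`G₁` cost function
`φ(v) = (1/2)(1−λ)·log det(Σ_YY + diag v) − (1/2)·log det(σ²I + diag v)
      + (λ/2)(log det Σ_YY + tr(Σ_YY⁻¹ diag v))`, for `λ ≥ 1`,
`Σ_YY` positive definite with `Σ_YY − σ²I` positive semidefinite. -/
theorem stmt_7 (m : ℕ) (Syy : Matrix (Fin m) (Fin m) ℝ) (hS : Syy.PosDef)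
    (σ2 : ℝ) (hσ : 0 < σ2) (hdom : (Syy - σ2 • (1 : Matrix (Fin m) (Fin m) ℝ)).PosSemidef)
    (lam : ℝ) (hlam : 1 ≤ lam) :
    ∀ (i : Fin m) (v : Fin m → ℝ), (∀ j, 0 ≤ v j) →
      ConvexOn ℝ (Set.Ici (0 : ℝ)) (fun t : ℝ =>
        (1 / 2) * (1 - lam) *
            Real.log ((Syy + Matrix.diagonal (Function.update v i t)).det)
          - (1 / 2) *
            Real.log ((σ2 • (1 : Matrix (Fin m) (Fin m) ℝ)
              + Matrix.diagonal (Function.update v i t)).det)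
          + (lam / 2) * (Real.log Syy.det
              + (Syy⁻¹ * Matrix.diagonal (Function.update v i t)).trace)) := by
  intro i v hv
  set D0 : Matrix (Fin m) (Fin m) ℝ := Matrix.diagonal (Function.update v i 0) with hD0def
  set Dp : Matrix (Fin m) (Fin m) ℝ := Matrix.diagonal (Pi.single i 1) with hDpdef
  have hD0 : D0.PosSemidef := by
    refine Matrix.posSemidef_diagonal_iff.mpr fun j => ?_
    simp only [Function.update_apply]
    split_ifs with h
    · exact le_refl 0
    · exact hv j
  have hM : (Syy + D0).PosDef := hS.add_posSemidef hD0
  have hN : ((σ2 • (1 : Matrix (Fin m) (Fin m) ℝ)) + D0).PosDef := by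
    refine Matrix.PosDef.add_posSemidef ?_ hD0
    rw [Matrix.smul_one_eq_diagonal]
    exact Matrix.posDef_diagonal_iff.mpr fun _ => hσ
  -- decomposition of the updated diagonal
  have hupd : ∀ t : ℝ, Function.update v i t
      = Function.update v i 0 + t • (Pi.single i (1:ℝ) : Fin m → ℝ) := by
    intro t; funext j
    by_cases hj : j = i
    · subst hj; simp
    · simp [Function.update_apply, hj, Pi.single_apply]
  have hdiag : ∀ t : ℝ, Matrix.diagonal (Function.update v i t) = D0 + t • Dp := by
    intro t
    rw [hupd t, hD0def, hDpdef, ← Matrix.diagonal_smul, Matrix.diagonal_add]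
    rfl
  set a1 : ℝ := (Syy + D0).det
  set b1 : ℝ := (Syy + D0).adjugate i i
  set a2 : ℝ := ((σ2 • (1 : Matrix (Fin m) (Fin m) ℝ)) + D0).det
  set b2 : ℝ := ((σ2 • (1 : Matrix (Fin m) (Fin m) ℝ)) + D0).adjugate i i
  set e0 : ℝ := (lam / 2) * (Real.log Syy.det + (Syy⁻¹ * D0).trace)
  set d0 : ℝ := (lam / 2) * (Syy⁻¹ * Dp).trace
  have hfun : (fun t : ℝ =>
        (1 / 2) * (1 - lam) *
            Real.log ((Syy + Matrix.diagonal (Function.update v i t)).det)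
          - (1 / 2) *
            Real.log ((σ2 • (1 : Matrix (Fin m) (Fin m) ℝ)
              + Matrix.diagonal (Function.update v i t)).det)
          + (lam / 2) * (Real.log Syy.det
              + (Syy⁻¹ * Matrix.diagonal (Function.update v i t)).trace))
      = (fun t : ℝ => ((1 / 2) * (1 - lam)) * Real.log (a1 + b1 * t)
          + (-(1 / 2)) * Real.log (a2 + b2 * t) + (e0 + d0 * t)) := by
    funext t
    have h1 : Syy + Matrix.diagonal (Function.update v i t) = (Syy + D0) + t • Dp := by
      rw [hdiag t, add_assoc]
    have h2 : (σ2 • (1 : Matrix (Fin m) (Fin m) ℝ)) + Matrix.diagonal (Function.update v i t)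
        = ((σ2 • (1 : Matrix (Fin m) (Fin m) ℝ)) + D0) + t • Dp := by
      rw [hdiag t, add_assoc]
    have h3 : (Syy⁻¹ * Matrix.diagonal (Function.update v i t)).trace
        = (Syy⁻¹ * D0).trace + t * (Syy⁻¹ * Dp).trace := by
      rw [hdiag t, Matrix.mul_add, Matrix.mul_smul, Matrix.trace_add, Matrix.trace_smul,
        smul_eq_mul]
    rw [h1, h2, h3, hDpdef, aux_det_affine, aux_det_affine]
    simp only [a1, b1, a2, b2, e0, d0, hDpdef]
    ring_nf
  rw [hfun]
  have c1 : ConvexOn ℝ (Set.Ici (0:ℝ)) (fun t : ℝ => ((1 / 2) * (1 - lam)) * Real.log (a1 + b1 * t)) :=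
    aux_convex a1 b1 _ hM.det_pos (aux_adj_nonneg hM i) (by nlinarith)
  have c2 : ConvexOn ℝ (Set.Ici (0:ℝ)) (fun t : ℝ => (-(1 / 2)) * Real.log (a2 + b2 * t)) :=
    aux_convex a2 b2 _ hN.det_pos (aux_adj_nonneg hN i) (by norm_num)
  exact (c1.add c2).add (aux_affine e0 d0)
end

section
/- Let Σ_YY be m×m positive definite, σ² > 0, a_i > 0, λ ≥ 0. The function φ(v) = (1/2)·log(1 + a_i/(σ² + v_i)) − (λ/2)·log det(Σ_YY + D(v)) + (λ/2)·(log det Σ_YY + tr(Σ_YY⁻¹ D(v))), with D(v) = diag(v₁,…,v_m), is convex in v_i on [0, ∞). -/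
open Matrix Real Set


lemma convexOn_congr_on {s : Set ℝ} {f g : ℝ → ℝ} (h : ConvexOn ℝ s f)
    (he : ∀ x ∈ s, f x = g x) : ConvexOn ℝ s g := by
  refine ⟨h.1, fun x hx y hy a b ha hb hab => ?_⟩
  rw [← he x hx, ← he y hy, ← he _ (h.1 hx hy ha hb hab)]
  exact h.2 hx hy ha hb hab

lemma convexOn_affine (p q : ℝ) : ConvexOn ℝ (Ici (0:ℝ)) (fun t => p * t + q) := by
  refine ⟨convex_Ici 0, fun x _ y _ a b _ _ hab => le_of_eq ?_⟩
  simp only [smul_eq_mul]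
  have : a * (p*x+q) + b * (p*y+q) = p * (a*x+b*y) + (a+b)*q := by ring
  rw [this, hab, one_mul]

lemma aux_log_convex (s0 a : ℝ) (hs : 0 < s0) (ha : 0 < a) :
    ConvexOn ℝ (Ici (0:ℝ)) (fun t => Real.log (a + s0 + t) - Real.log (s0 + t)) := by
  set f : ℝ → ℝ := fun t => Real.log (a + s0 + t) - Real.log (s0 + t) with hf
  set g : ℝ → ℝ := fun t => (a + s0 + t)⁻¹ - (s0 + t)⁻¹ with hg
  have h1 : ∀ x : ℝ, 0 ≤ x → a + s0 + x ≠ 0 := fun x hx => by positivity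
  have h2 : ∀ x : ℝ, 0 ≤ x → s0 + x ≠ 0 := fun x hx => by positivity
  have hder : ∀ x : ℝ, 0 ≤ x → HasDerivAt f (g x) x := by
    intro x hx
    have d1 : HasDerivAt (fun t : ℝ => a + s0 + t) 1 x := (hasDerivAt_id x).const_add _
    have d2 : HasDerivAt (fun t : ℝ => s0 + t) 1 x := (hasDerivAt_id x).const_add _
    have l1 : HasDerivAt (fun t : ℝ => Real.log (a + s0 + t)) ((a+s0+x)⁻¹ * 1) x :=
      (Real.hasDerivAt_log (h1 x hx)).comp x d1
    have l2 : HasDerivAt (fun t : ℝ => Real.log (s0 + t)) ((s0+x)⁻¹ * 1) x :=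
      (Real.hasDerivAt_log (h2 x hx)).comp x d2
    simpa [hg, mul_one] using l1.fun_sub l2
  have hderg : ∀ x : ℝ, 0 ≤ x →
      HasDerivAt g (-(((a+s0+x)^2)⁻¹) + ((s0+x)^2)⁻¹) x := by
    intro x hx
    have d1 : HasDerivAt (fun t : ℝ => a + s0 + t) 1 x := (hasDerivAt_id x).const_add _
    have d2 : HasDerivAt (fun t : ℝ => s0 + t) 1 x := (hasDerivAt_id x).const_add _
    have i1 : HasDerivAt (fun t : ℝ => (a + s0 + t)⁻¹) (-(((a+s0+x)^2)⁻¹) * 1) x :=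
      (hasDerivAt_inv (h1 x hx)).comp x d1
    have i2 : HasDerivAt (fun t : ℝ => (s0 + t)⁻¹) (-(((s0+x)^2)⁻¹) * 1) x :=
      (hasDerivAt_inv (h2 x hx)).comp x d2
    have := i1.fun_sub i2
    simpa [hg, mul_one, sub_neg_eq_add] using this
  have hcont : ContinuousOn f (Ici 0) := fun x hx => ((hder x hx).continuousAt).continuousWithinAt
  have hdiff : DifferentiableOn ℝ f (interior (Ici (0:ℝ))) := by
    rw [interior_Ici]
    exact fun x hx => ((hder x (le_of_lt hx)).differentiableAt).differentiableWithinAt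
  have hderiv_eq : ∀ x ∈ Ioi (0:ℝ), deriv f x = g x := fun x hx => (hder x hx.le).deriv
  have hdiff2 : DifferentiableOn ℝ (deriv f) (interior (Ici (0:ℝ))) := by
    rw [interior_Ici]
    have : DifferentiableOn ℝ g (Ioi 0) :=
      fun x hx => ((hderg x hx.le).differentiableAt).differentiableWithinAt
    exact this.congr hderiv_eq
  refine convexOn_of_deriv2_nonneg (convex_Ici 0) hcont hdiff hdiff2 ?_
  intro x hx
  rw [interior_Ici] at hx
  have heq : deriv f =ᶠ[nhds x] g :=
    Filter.eventuallyEq_of_mem (Ioi_mem_nhds hx) hderiv_eq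
  have : deriv^[2] f x = deriv (deriv f) x := by simp [Function.iterate_succ]
  rw [this, heq.deriv_eq, (hderg x hx.le).deriv]
  have hx0 : (0:ℝ) < x := hx
  have hsx : (0:ℝ) < s0 + x := by linarith
  have hasx : (0:ℝ) < a + s0 + x := by linarith
  have hsle : (s0 + x)^2 ≤ (a + s0 + x)^2 := by nlinarith
  have h1' : (0:ℝ) < (s0+x)^2 := by positivity
  have h2' : (0:ℝ) < (a+s0+x)^2 := by positivity
  have := one_div_le_one_div_of_le h1' hsle
  simp only [one_div] at this
  linarith

/-- Convexity in `v_i` of the game-`G₂` cost function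
`φ(v) = (1/2)·log(1 + a_i/(σ²+v_i)) − (λ/2)·log det(Σ_YY + diag v)
      + (λ/2)(log det Σ_YY + tr(Σ_YY⁻¹ diag v))`. -/
theorem stmt_8 (m : ℕ) (Syy : Matrix (Fin m) (Fin m) ℝ) (hS : Syy.PosDef)
    (σ2 : ℝ) (hσ : 0 < σ2) (ai : ℝ) (hai : 0 < ai) (lam : ℝ) (hlam : 0 ≤ lam) :
    ∀ (i : Fin m) (v : Fin m → ℝ), (∀ j, 0 ≤ v j) →
      ConvexOn ℝ (Set.Ici (0 : ℝ)) (fun t : ℝ =>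
        (1 / 2) * Real.log (1 + ai / (σ2 + t))
          - (lam / 2) * Real.log ((Syy + Matrix.diagonal (Function.update v i t)).det)
          + (lam / 2) * (Real.log Syy.det
              + (Syy⁻¹ * Matrix.diagonal (Function.update v i t)).trace)) := by
  intro i v hv
  -- positive definiteness for t ≥ 0
  have hposdef : ∀ t : ℝ, 0 ≤ t → (Syy + Matrix.diagonal (Function.update v i t)).PosDef := by
    intro t ht
    refine hS.add_posSemidef (Matrix.posSemidef_diagonal_iff.mpr fun j => ?_)
    rcases eq_or_ne j i with rfl | hj
    · simpa using ht
    · simpa [Function.update_apply, hj] using hv j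
  set M : Matrix (Fin m) (Fin m) ℝ := Syy + Matrix.diagonal (Function.update v i 0) with hM
  set c0 : ℝ := M.det with hc0
  set c1 : ℝ := (M.updateRow i ((Pi.single i 1 : Fin m → ℝ))).det with hc1
  have hdet : ∀ t : ℝ, (Syy + Matrix.diagonal (Function.update v i t)).det = c0 + c1 * t := by
    intro t
    have hrow : Syy + Matrix.diagonal (Function.update v i t)
        = M.updateRow i (M i + t • (Pi.single i 1 : Fin m → ℝ)) := by
      ext j k
      rcases eq_or_ne j i with rfl | hj
      · rcases eq_or_ne k j with rfl | hk
        · simp [hM, Matrix.updateRow_self, Matrix.add_apply, Matrix.diagonal_apply,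
            Function.update_apply, Pi.single_apply]
        · simp [hM, Matrix.updateRow_self, Matrix.add_apply, Matrix.diagonal_apply,
            Function.update_apply, Pi.single_apply, (Ne.symm hk), hk]
      · simp only [hM, Matrix.updateRow_ne hj, Matrix.add_apply]
        congr 1
        rcases eq_or_ne j k with rfl | hjk
        · simp [Matrix.diagonal_apply_eq, Function.update_apply, hj]
        · simp [Matrix.diagonal_apply_ne _ hjk]
    rw [hrow, Matrix.det_updateRow_add, Matrix.updateRow_eq_self, Matrix.det_updateRow_smul,
      ← hc0, ← hc1]
    ring
  have hpos : ∀ t : ℝ, 0 ≤ t → 0 < c0 + c1 * t := by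
    intro t ht
    rw [← hdet t]
    exact (hposdef t ht).det_pos
  -- trace is affine
  set q0 : ℝ := (Syy⁻¹ * Matrix.diagonal (Function.update v i 0)).trace with hq0
  set q1 : ℝ := (Syy⁻¹ * Matrix.diagonal ((Pi.single i 1 : Fin m → ℝ))).trace with hq1
  have hupd : ∀ t : ℝ, Function.update v i t = Function.update v i 0 + t • (Pi.single i 1 : Fin m → ℝ) := by
    intro t; ext j
    rcases eq_or_ne j i with rfl | hj
    · simp
    · simp [Function.update_apply, hj, Pi.single_apply]
  have hd : ∀ t : ℝ, Matrix.diagonal (Function.update v i t)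
      = Matrix.diagonal (Function.update v i 0)
        + t • Matrix.diagonal ((Pi.single i 1 : Fin m → ℝ)) := by
    intro t
    ext j k
    rcases eq_or_ne j k with rfl | hjk
    · rcases eq_or_ne j i with rfl | hji
      · simp [Matrix.diagonal_apply_eq, Function.update_apply, Matrix.add_apply,
          Matrix.smul_apply, Pi.single_apply]
      · simp [Matrix.diagonal_apply_eq, Function.update_apply, Matrix.add_apply,
          Matrix.smul_apply, Pi.single_apply, hji]
    · simp [Matrix.diagonal_apply_ne _ hjk, Matrix.add_apply, Matrix.smul_apply]
  have htr : ∀ t : ℝ, (Syy⁻¹ * Matrix.diagonal (Function.update v i t)).trace = q0 + q1 * t := by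
    intro t
    rw [hd t, Matrix.mul_add, Matrix.trace_add, Matrix.mul_smul, Matrix.trace_smul, smul_eq_mul,
      ← hq0, ← hq1]
    ring
  -- convex pieces
  have piece1 : ConvexOn ℝ (Ici (0:ℝ))
      (fun t => (1/2 : ℝ) • (Real.log (ai + σ2 + t) - Real.log (σ2 + t))) :=
    (aux_log_convex σ2 ai hσ hai).smul (by norm_num)
  have hlin : ∀ t : ℝ, (AffineMap.lineMap c0 (c0 + c1) : ℝ →ᵃ[ℝ] ℝ) t = c0 + c1 * t := by
    intro t; simp [AffineMap.lineMap_apply]; ring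
  have hsub : Ici (0:ℝ) ⊆ (AffineMap.lineMap c0 (c0 + c1) : ℝ →ᵃ[ℝ] ℝ) ⁻¹' Ioi 0 := by
    intro t ht
    simp only [mem_preimage, mem_Ioi, hlin t]
    exact hpos t ht
  have piece2 : ConvexOn ℝ (Ici (0:ℝ))
      (fun t => (lam/2 : ℝ) • (-(Real.log ((AffineMap.lineMap c0 (c0 + c1) : ℝ →ᵃ[ℝ] ℝ) t)))) := by
    have h := (strictConcaveOn_log_Ioi.concaveOn.comp_affineMap
      (AffineMap.lineMap c0 (c0 + c1) : ℝ →ᵃ[ℝ] ℝ)).subset hsub (convex_Ici 0)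
    exact (h.neg).smul (by linarith)
  have piece3 : ConvexOn ℝ (Ici (0:ℝ))
      (fun t => (lam/2 * q1) * t + (lam/2) * (Real.log Syy.det + q0)) :=
    convexOn_affine _ _
  have hsum := (piece1.add piece2).add piece3
  refine convexOn_congr_on hsum ?_
  intro t ht
  have hst : (0:ℝ) < σ2 + t := by
    have := ht; simp only [mem_Ici] at this; linarith
  have hlog1 : Real.log (1 + ai / (σ2 + t)) = Real.log (ai + σ2 + t) - Real.log (σ2 + t) := by
    rw [show (1 : ℝ) + ai / (σ2 + t) = (ai + σ2 + t) / (σ2 + t) by field_simp; ring,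
      Real.log_div (ne_of_gt (by linarith)) (ne_of_gt hst)]
  simp only [Pi.add_apply, smul_eq_mul, hlin t, hdet t, htr t, hlog1]
  ring
end

section
/- Let Σ_YY be an m×m positive definite matrix with Σ_YY − σ²I positive semidefinite and σ² > 0. For v ∈ [0,∞)ᵐ, the function v ↦ log det(Σ_YY + diag(v)) − log det(σ²I + diag(v)) is nonnegative and tends to 0 as min_i v_i → ∞. -/
open Matrix Real

namespace Stmt11Aux

variable {m : ℕ}

lemma conj_shift {P : Matrix (Fin m) (Fin m) ℝ} (hP : P.IsHermitian) (t s : ℝ) :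
    t • (1 : Matrix (Fin m) (Fin m) ℝ) + s • P =
      (hP.eigenvectorUnitary : Matrix (Fin m) (Fin m) ℝ) *
        Matrix.diagonal (fun i => t + s * hP.eigenvalues i) *
        star (hP.eigenvectorUnitary : Matrix (Fin m) (Fin m) ℝ) := by
  set U : Matrix (Fin m) (Fin m) ℝ := (hP.eigenvectorUnitary : Matrix (Fin m) (Fin m) ℝ) with hUdef
  have hU : U * star U = 1 := Matrix.mem_unitaryGroup_iff.mp hP.eigenvectorUnitary.2
  have hdiag : Matrix.diagonal (fun i => t + s * hP.eigenvalues i) =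
      t • (1 : Matrix (Fin m) (Fin m) ℝ) +
        s • Matrix.diagonal (RCLike.ofReal ∘ hP.eigenvalues) := by
    ext i j
    by_cases h : i = j <;>
      simp [Matrix.diagonal_apply, Matrix.one_apply, h]
  rw [hdiag]
  simp only [mul_add, add_mul, mul_smul_comm, smul_mul_assoc, mul_one, hU]
  exact congrArg (fun X => t • (1 : Matrix (Fin m) (Fin m) ℝ) + s • X) hP.spectral_theorem

lemma det_shift {P : Matrix (Fin m) (Fin m) ℝ} (hP : P.IsHermitian) (t s : ℝ) :
    (t • (1 : Matrix (Fin m) (Fin m) ℝ) + s • P).det =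
      ∏ i, (t + s * hP.eigenvalues i) := by
  rw [conj_shift hP t s, Matrix.det_mul, Matrix.det_mul, Matrix.det_diagonal]
  have hU : (hP.eigenvectorUnitary : Matrix (Fin m) (Fin m) ℝ) *
      star (hP.eigenvectorUnitary : Matrix (Fin m) (Fin m) ℝ) = 1 :=
    Matrix.mem_unitaryGroup_iff.mp hP.eigenvectorUnitary.2
  have h1 : (hP.eigenvectorUnitary : Matrix (Fin m) (Fin m) ℝ).det *
      (star (hP.eigenvectorUnitary : Matrix (Fin m) (Fin m) ℝ)).det = 1 := by
    rw [← Matrix.det_mul, hU, Matrix.det_one]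
  calc _ = (∏ i, (t + s * hP.eigenvalues i)) *
        ((hP.eigenvectorUnitary : Matrix (Fin m) (Fin m) ℝ).det *
          (star (hP.eigenvectorUnitary : Matrix (Fin m) (Fin m) ℝ)).det) := by ring
    _ = _ := by rw [h1, mul_one]

lemma psd_shift {P : Matrix (Fin m) (Fin m) ℝ} (hP : P.IsHermitian) (t s : ℝ)
    (h : ∀ i, 0 ≤ t + s * hP.eigenvalues i) :
    (t • (1 : Matrix (Fin m) (Fin m) ℝ) + s • P).PosSemidef := by
  rw [conj_shift hP t s]
  have hd : (Matrix.diagonal fun i => t + s * hP.eigenvalues i).PosSemidef :=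
    Matrix.posSemidef_diagonal_iff.mpr h
  simpa [Matrix.star_eq_conjTranspose] using
    hd.mul_mul_conjTranspose_same (hP.eigenvectorUnitary : Matrix (Fin m) (Fin m) ℝ)

lemma trace_eq {P : Matrix (Fin m) (Fin m) ℝ} (hP : P.IsHermitian) :
    P.trace = ∑ i, hP.eigenvalues i := by
  have hU : (hP.eigenvectorUnitary : Matrix (Fin m) (Fin m) ℝ) *
      star (hP.eigenvectorUnitary : Matrix (Fin m) (Fin m) ℝ) = 1 :=
    Matrix.mem_unitaryGroup_iff.mp hP.eigenvectorUnitary.2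
  have hU' : star (hP.eigenvectorUnitary : Matrix (Fin m) (Fin m) ℝ) *
      (hP.eigenvectorUnitary : Matrix (Fin m) (Fin m) ℝ) = 1 :=
    mul_eq_one_comm.mp hU
  conv_lhs => rw [hP.spectral_theorem, Unitary.conjStarAlgAut_apply]
  rw [Matrix.trace_mul_comm, ← Matrix.mul_assoc, hU', Matrix.one_mul, Matrix.trace_diagonal]
  simp

open scoped MatrixOrder in
/-- Determinant monotonicity: if `A` is positive definite and `P` positive semidefinite,
then `det A ≤ det (A + P)`. -/
lemma det_mono {A P : Matrix (Fin m) (Fin m) ℝ} (hA : A.PosDef) (hP : P.PosSemidef) :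
    A.det ≤ (A + P).det := by
  set Q := CFC.sqrt A with hQdef
  have hQps : Q.PosSemidef := (CFC.sqrt_nonneg A).posSemidef
  have hQQ : Q * Q = A := CFC.sqrt_mul_sqrt_self A hA.posSemidef.nonneg
  have hdetA : Q.det * Q.det = A.det := by rw [← Matrix.det_mul, hQQ]
  have hQdet : Q.det ≠ 0 := by
    intro h
    rw [h, mul_zero] at hdetA
    exact absurd hdetA.symm (ne_of_gt hA.det_pos)
  have hQH : Q.IsHermitian := hQps.isHermitian
  have hQinvH : (Q⁻¹).IsHermitian := hQH.inv
  set X := Q⁻¹ * P * Q⁻¹ with hXdef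
  have hXps : X.PosSemidef := by
    have := hP.conjTranspose_mul_mul_same (Q⁻¹)
    rwa [show (Q⁻¹)ᴴ = Q⁻¹ from hQinvH] at this
  have h1 : Q * Q⁻¹ = 1 := Matrix.mul_nonsing_inv Q (isUnit_iff_ne_zero.mpr hQdet)
  have h2 : Q⁻¹ * Q = 1 := Matrix.nonsing_inv_mul Q (isUnit_iff_ne_zero.mpr hQdet)
  have hdecomp : A + P = Q * (1 + X) * Q := by
    have : Q * (1 + X) * Q = Q * Q + (Q * Q⁻¹) * P * (Q⁻¹ * Q) := by
      rw [hXdef]; noncomm_ring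
    rw [this, h1, h2, Matrix.one_mul, Matrix.mul_one, hQQ]
  have hXone : (1 : Matrix (Fin m) (Fin m) ℝ) + X =
      (1 : ℝ) • (1 : Matrix (Fin m) (Fin m) ℝ) + (1 : ℝ) • X := by simp
  have hone : (1 : ℝ) ≤ (1 + X).det := by
    rw [hXone, det_shift hXps.isHermitian 1 1]
    calc (1 : ℝ) = ∏ _i : Fin m, (1 : ℝ) := by simp
      _ ≤ _ := by
          apply Finset.prod_le_prod (fun i _ => by norm_num)
          intro i _
          have := hXps.eigenvalues_nonneg i
          linarith
  have : (A + P).det = A.det * (1 + X).det := by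
    rw [hdecomp, Matrix.det_mul, Matrix.det_mul, ← hdetA]; ring
  rw [this]
  exact le_mul_of_one_le_right (le_of_lt hA.det_pos) hone

lemma smul_one_add_diagonal (c : ℝ) (v : Fin m → ℝ) :
    c • (1 : Matrix (Fin m) (Fin m) ℝ) + Matrix.diagonal v =
      Matrix.diagonal (fun i => c + v i) := by
  ext i j
  by_cases h : i = j <;> simp [Matrix.diagonal_apply, Matrix.one_apply, h]

end Stmt11Aux

open Stmt11Aux

/-- For `Σ_YY` positive definite with `Σ_YY − σ²I` positive semidefinite, the function
`v ↦ log det(Σ_YY + diag v) − log det(σ²I + diag v)` is nonnegative on `[0,∞)ᵐ`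
and tends to `0` as `min_i v_i → ∞`. -/
theorem stmt_11 (m : ℕ) (Syy : Matrix (Fin m) (Fin m) ℝ) (hS : Syy.PosDef)
    (σ2 : ℝ) (hσ : 0 < σ2) (hdom : (Syy - σ2 • (1 : Matrix (Fin m) (Fin m) ℝ)).PosSemidef) :
    (∀ v : Fin m → ℝ, (∀ i, 0 ≤ v i) →
      0 ≤ Real.log ((Syy + Matrix.diagonal v).det)
          - Real.log ((σ2 • (1 : Matrix (Fin m) (Fin m) ℝ) + Matrix.diagonal v).det)) ∧
    (∀ ε : ℝ, 0 < ε → ∃ M : ℝ, ∀ v : Fin m → ℝ, (∀ i, 0 ≤ v i) → (∀ i, M ≤ v i) →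
      Real.log ((Syy + Matrix.diagonal v).det)
        - Real.log ((σ2 • (1 : Matrix (Fin m) (Fin m) ℝ) + Matrix.diagonal v).det) < ε) := by
  have hPH : (Syy - σ2 • (1 : Matrix (Fin m) (Fin m) ℝ)).IsHermitian := hdom.isHermitian
  -- determinant of the noise part
  have hBdet : ∀ v : Fin m → ℝ, (∀ i, 0 ≤ v i) →
      (σ2 • (1 : Matrix (Fin m) (Fin m) ℝ) + Matrix.diagonal v).det = ∏ i, (σ2 + v i) := by
    intro v hv
    rw [smul_one_add_diagonal, Matrix.det_diagonal]
  have hBpd : ∀ v : Fin m → ℝ, (∀ i, 0 ≤ v i) →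
      (σ2 • (1 : Matrix (Fin m) (Fin m) ℝ) + Matrix.diagonal v).PosDef := by
    intro v hv
    rw [smul_one_add_diagonal]
    exact Matrix.posDef_diagonal_iff.mpr fun i => by have := hv i; linarith
  -- key monotonicity : det (σ²I + D) ≤ det (Syy + D)
  have hkey : ∀ v : Fin m → ℝ, (∀ i, 0 ≤ v i) →
      (σ2 • (1 : Matrix (Fin m) (Fin m) ℝ) + Matrix.diagonal v).det ≤
        (Syy + Matrix.diagonal v).det := by
    intro v hv
    have h := det_mono (hBpd v hv) hdom
    have heq : σ2 • (1 : Matrix (Fin m) (Fin m) ℝ) + Matrix.diagonal v +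
        (Syy - σ2 • (1 : Matrix (Fin m) (Fin m) ℝ)) = Syy + Matrix.diagonal v := by abel
    rwa [heq] at h
  constructor
  · intro v hv
    have hB := (hBpd v hv).det_pos
    have := Real.log_le_log hB (hkey v hv)
    linarith
  · intro ε hε
    set T := (Syy - σ2 • (1 : Matrix (Fin m) (Fin m) ℝ)).trace with hTdef
    have htr : T = ∑ i, hPH.eigenvalues i := trace_eq hPH
    have hlam : ∀ i, 0 ≤ hPH.eigenvalues i := hdom.eigenvalues_nonneg
    have hT0 : 0 ≤ T := htr ▸ Finset.sum_nonneg fun i _ => hlam i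
    refine ⟨T * m / ε, fun v hv0 hvM => ?_⟩
    set D := Matrix.diagonal v with hDdef
    have hDps : D.PosSemidef := Matrix.posSemidef_diagonal_iff.mpr hv0
    have hSD : (Syy + D).PosDef := hS.add_posSemidef hDps
    -- upper bound matrix : (σ2 + T) • 1
    have hcI : ((σ2 + T) • (1 : Matrix (Fin m) (Fin m) ℝ) - Syy).PosSemidef := by
      have heq : (σ2 + T) • (1 : Matrix (Fin m) (Fin m) ℝ) - Syy =
          T • (1 : Matrix (Fin m) (Fin m) ℝ) +
            (-1 : ℝ) • (Syy - σ2 • (1 : Matrix (Fin m) (Fin m) ℝ)) := by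
        module
      rw [heq]
      refine psd_shift hPH T (-1) fun i => ?_
      have hle : hPH.eigenvalues i ≤ T := by
        rw [htr]
        exact Finset.single_le_sum (fun j _ => hlam j) (Finset.mem_univ i)
      linarith
    have h1 : (Syy + D).det ≤ ((σ2 + T) • (1 : Matrix (Fin m) (Fin m) ℝ) + D).det := by
      have h := det_mono hSD hcI
      have heq : Syy + D + ((σ2 + T) • (1 : Matrix (Fin m) (Fin m) ℝ) - Syy) =
          (σ2 + T) • (1 : Matrix (Fin m) (Fin m) ℝ) + D := by abel
      rwa [heq] at h
    have hCdet : ((σ2 + T) • (1 : Matrix (Fin m) (Fin m) ℝ) + D).det =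
        ∏ i, (σ2 + T + v i) := by
      rw [hDdef, smul_one_add_diagonal, Matrix.det_diagonal]
    have hBpos : ∀ i, (0:ℝ) < σ2 + v i := fun i => by have := hv0 i; linarith
    have hCpos : ∀ i, (0:ℝ) < σ2 + T + v i := fun i => by have := hv0 i; linarith
    -- log of upper bound
    have hlogS : Real.log ((Syy + D).det) ≤ ∑ i, Real.log (σ2 + T + v i) := by
      have hposS := hSD.det_pos
      calc Real.log ((Syy + D).det)
          ≤ Real.log (∏ i, (σ2 + T + v i)) := by
            apply Real.log_le_log hposS
            rw [← hCdet]; exact h1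
        _ = ∑ i, Real.log (σ2 + T + v i) :=
            Real.log_prod fun i _ => ne_of_gt (hCpos i)
    have hlogB : Real.log ((σ2 • (1 : Matrix (Fin m) (Fin m) ℝ) + D).det) =
        ∑ i, Real.log (σ2 + v i) := by
      rw [hBdet v hv0]
      exact Real.log_prod fun i _ => ne_of_gt (hBpos i)
    -- termwise bound
    have hM0 : (0:ℝ) ≤ T * m / ε := by positivity
    have hBM : (0:ℝ) < σ2 + T * m / ε := by linarith
    have hterm : ∀ i, Real.log (σ2 + T + v i) - Real.log (σ2 + v i) ≤
        T / (σ2 + T * m / ε) := by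
      intro i
      have h3 : Real.log (σ2 + T + v i) - Real.log (σ2 + v i) =
          Real.log ((σ2 + T + v i) / (σ2 + v i)) := by
        rw [Real.log_div (ne_of_gt (hCpos i)) (ne_of_gt (hBpos i))]
      have h4 : Real.log ((σ2 + T + v i) / (σ2 + v i)) ≤
          (σ2 + T + v i) / (σ2 + v i) - 1 :=
        Real.log_le_sub_one_of_pos (div_pos (hCpos i) (hBpos i))
      have h5 : (σ2 + T + v i) / (σ2 + v i) - 1 = T / (σ2 + v i) := by
        rw [div_sub_one (ne_of_gt (hBpos i))]; congr 1; ring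
      have h6 : T / (σ2 + v i) ≤ T / (σ2 + T * m / ε) := by
        apply div_le_div_of_nonneg_left hT0 hBM
        have := hvM i; linarith
      rw [h3]; linarith
    have hsum : ∑ i, Real.log (σ2 + T + v i) - ∑ i, Real.log (σ2 + v i) ≤
        (m : ℝ) * (T / (σ2 + T * m / ε)) := by
      rw [← Finset.sum_sub_distrib]
      calc ∑ i, (Real.log (σ2 + T + v i) - Real.log (σ2 + v i))
          ≤ ∑ _i : Fin m, T / (σ2 + T * m / ε) :=
            Finset.sum_le_sum fun i _ => hterm i
        _ = (m : ℝ) * (T / (σ2 + T * m / ε)) := by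
            simp [Finset.sum_const, Finset.card_univ, nsmul_eq_mul]
    have hfinal : (m : ℝ) * (T / (σ2 + T * m / ε)) < ε := by
      rw [mul_div_assoc', div_lt_iff₀ hBM]
      have : ε * (σ2 + T * m / ε) = ε * σ2 + T * m := by
        field_simp
      rw [this]
      nlinarith
    have := hlogS
    rw [hlogB]
    linarith
end

section
/- Let s > 0 be the variance of a measurement and λ > 0. The function g(v) = (1/2)·log(1 + a/(σ²+v)) + (λ/2)·(v/s + log(s/(s+v))) on [0,∞), with a, σ² > 0, is convex, and its derivative at v = 0 equals −a/(2σ²(σ²+a)) + 0; hence if a/(σ²(σ²+a)) > 0 the unconstrained minimizer of g is strictly positive. -/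
open Real Set

private lemma aux_hasDerivAt (s lam a σ2 : ℝ) (hs : 0 < s) (ha : 0 < a) (hσ : 0 < σ2)
    (v : ℝ) (hv1 : 0 < σ2 + v) (hv2 : 0 < s + v) :
    HasDerivAt (fun v : ℝ => (1 / 2) * Real.log (1 + a / (σ2 + v))
          + (lam / 2) * (v / s + Real.log (s / (s + v))))
      ((1 / 2) * (-a / ((σ2 + v) * (σ2 + v + a))) + (lam / 2) * (1 / s - 1 / (s + v))) v := by
  have h1 : HasDerivAt (fun w : ℝ => σ2 + w) 1 v := by
    simpa using (hasDerivAt_id v).const_add σ2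
  have h2 : HasDerivAt (fun w : ℝ => s + w) 1 v := by
    simpa using (hasDerivAt_id v).const_add s
  have hne1 : σ2 + v ≠ 0 := ne_of_gt hv1
  have hne2 : s + v ≠ 0 := ne_of_gt hv2
  have hu : HasDerivAt (fun w : ℝ => 1 + a / (σ2 + w)) (-a / (σ2 + v) ^ 2) v := by
    have : HasDerivAt (fun w : ℝ => 1 + a / (σ2 + w)) ((0 * (σ2 + v) - a * 1) / (σ2 + v) ^ 2) v :=
      ((hasDerivAt_const v a).div h1 hne1).const_add 1
    convert this using 1
    ring
  have hupos : 0 < 1 + a / (σ2 + v) := by positivity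
  have hlog1 : HasDerivAt (fun w : ℝ => Real.log (1 + a / (σ2 + w)))
      ((-a / (σ2 + v) ^ 2) / (1 + a / (σ2 + v))) v := hu.log (ne_of_gt hupos)
  have hq : HasDerivAt (fun w : ℝ => s / (s + w)) (-s / (s + v) ^ 2) v := by
    convert (show HasDerivAt (fun w : ℝ => s / (s + w)) ((0 * (s + v) - s * 1) / (s + v) ^ 2) v from
      (hasDerivAt_const v s).div h2 hne2) using 1
    ring
  have hqpos : 0 < s / (s + v) := by positivity
  have hlog2 : HasDerivAt (fun w : ℝ => Real.log (s / (s + w)))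
      ((-s / (s + v) ^ 2) / (s / (s + v))) v := hq.log (ne_of_gt hqpos)
  have hlin : HasDerivAt (fun w : ℝ => w / s) (1 / s) v := by
    simpa using (hasDerivAt_id v).div_const s
  have hsum : HasDerivAt (fun w : ℝ => (1 / 2) * Real.log (1 + a / (σ2 + w))
        + (lam / 2) * (w / s + Real.log (s / (s + w))))
      (1 / 2 * (-a / (σ2 + v) ^ 2 / (1 + a / (σ2 + v)))
        + lam / 2 * (1 / s + -s / (s + v) ^ 2 / (s / (s + v)))) v := (hlog1.const_mul (1 / 2 : ℝ)).add ((hlin.add hlog2).const_mul (lam / 2))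
  convert hsum using 1
  have hca : σ2 + v + a ≠ 0 := by positivity
  field_simp
  ring

/-- Single-attacker tradeoff `g(v) = (1/2)log(1 + a/(σ²+v)) + (λ/2)(v/s + log(s/(s+v)))`
on `[0,∞)`: `g` is convex, its derivative at `0` is `−a/(2σ²(σ²+a))`, and any
minimizer of `g` over `[0,∞)` is strictly positive. -/
theorem stmt_12 (s lam a σ2 : ℝ) (hs : 0 < s) (hlam : 0 < lam) (ha : 0 < a) (hσ : 0 < σ2) :
    ConvexOn ℝ (Set.Ici (0 : ℝ))
        (fun v : ℝ => (1 / 2) * Real.log (1 + a / (σ2 + v))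
          + (lam / 2) * (v / s + Real.log (s / (s + v)))) ∧
    HasDerivAt (fun v : ℝ => (1 / 2) * Real.log (1 + a / (σ2 + v))
          + (lam / 2) * (v / s + Real.log (s / (s + v))))
        (-a / (2 * σ2 * (σ2 + a)) + 0) 0 ∧
    (0 < a / (σ2 * (σ2 + a)) →
      ∀ w : ℝ, 0 ≤ w →
        IsMinOn (fun v : ℝ => (1 / 2) * Real.log (1 + a / (σ2 + v))
          + (lam / 2) * (v / s + Real.log (s / (s + v)))) (Set.Ici (0 : ℝ)) w → 0 < w) := by
  set f : ℝ → ℝ := fun v : ℝ => (1 / 2) * Real.log (1 + a / (σ2 + v))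
          + (lam / 2) * (v / s + Real.log (s / (s + v))) with hf
  set φ : ℝ → ℝ := fun v : ℝ =>
      (1 / 2) * (-a / ((σ2 + v) * (σ2 + v + a))) + (lam / 2) * (1 / s - 1 / (s + v)) with hφ
  have key : ∀ v : ℝ, 0 ≤ v → HasDerivAt f (φ v) v := fun v hv =>
    aux_hasDerivAt s lam a σ2 hs ha hσ v (by linarith) (by linarith)
  -- derivative at 0
  have hd0val : φ 0 = -a / (2 * σ2 * (σ2 + a)) + 0 := by
    have h1 : σ2 ≠ 0 := ne_of_gt hσ
    have h2 : σ2 + a ≠ 0 := by positivity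
    have h3 : s ≠ 0 := ne_of_gt hs
    simp only [hφ, add_zero, sub_self, mul_zero]
    rw [neg_div, neg_div, mul_neg, neg_inj, div_mul_div_comm, one_mul, mul_assoc]
  have hd0 : HasDerivAt f (-a / (2 * σ2 * (σ2 + a)) + 0) 0 := hd0val ▸ key 0 le_rfl
  -- convexity
  have hconv : ConvexOn ℝ (Set.Ici (0 : ℝ)) f := by
    apply MonotoneOn.convexOn_of_deriv (convex_Ici 0)
    · exact fun v hv => ((key v hv).continuousAt).continuousWithinAt
    · rw [interior_Ici]
      exact fun v hv => ((key v (le_of_lt hv)).differentiableAt).differentiableWithinAt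
    · rw [interior_Ici]
      intro x hx y hy hxy
      rw [Set.mem_Ioi] at hx hy
      rw [(key x hx.le).deriv, (key y hy.le).deriv]
      have hA : a / ((σ2 + y) * (σ2 + y + a)) ≤ a / ((σ2 + x) * (σ2 + x + a)) := by
        have hDx : 0 < (σ2 + x) * (σ2 + x + a) := by nlinarith
        have hDle : (σ2 + x) * (σ2 + x + a) ≤ (σ2 + y) * (σ2 + y + a) := by nlinarith
        exact div_le_div_of_nonneg_left ha.le hDx hDle
      have hB : 1 / (s + y) ≤ 1 / (s + x) := by
        gcongr
      have hA' : (1 / 2 : ℝ) * (-a / ((σ2 + x) * (σ2 + x + a)))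
          ≤ (1 / 2) * (-a / ((σ2 + y) * (σ2 + y + a))) := by
        rw [neg_div, neg_div]
        linarith
      have hB' : (lam / 2) * (1 / s - 1 / (s + x)) ≤ (lam / 2) * (1 / s - 1 / (s + y)) :=
        mul_le_mul_of_nonneg_left (by linarith) (by positivity)
      exact add_le_add hA' hB'
  refine ⟨hconv, hd0, ?_⟩
  intro hpos w hw hmin
  rcases hw.lt_or_eq with h | h
  · exact h
  · exfalso
    subst h
    have hmem : (1 : ℝ) ∈ posTangentConeAt (Set.Ici (0 : ℝ)) 0 := by
      apply mem_posTangentConeAt_of_segment_subset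
      rw [segment_eq_Icc (by norm_num : (0 : ℝ) ≤ 0 + 1)]
      exact fun t ht => ht.1
    have hnonneg : (0 : ℝ) ≤ (1 : ℝ →L[ℝ] ℝ).smulRight (-a / (2 * σ2 * (σ2 + a)) + 0) 1 :=
      hmin.localize.hasFDerivWithinAt_nonneg (hd0.hasFDerivAt.hasFDerivWithinAt) hmem
    have hval : ((1 : ℝ →L[ℝ] ℝ).smulRight (-a / (2 * σ2 * (σ2 + a)) + 0)) 1
        = -a / (2 * σ2 * (σ2 + a)) + 0 := by simp
    rw [hval] at hnonneg
    have hneg : -a / (2 * σ2 * (σ2 + a)) + 0 < 0 := by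
      rw [add_zero]
      exact div_neg_of_neg_of_pos (by linarith) (by positivity)
    linarith
end

section
/- Let Σ be an m×m positive definite matrix and v, w ∈ [0,∞)ᵐ with v ≤ w componentwise. Then log det(Σ + diag(w)) − log det(Σ + diag(v)) ≤ Σ_i log(1 + (w_i − v_i)/(λ_min(Σ) + v_i)), where λ_min(Σ) is the smallest eigenvalue of Σ. -/
open Matrix Real

private theorem lemA {n : Type*} [Fintype n] [DecidableEq n] [Nonempty n] {S : Matrix n n ℝ}
    (hS : S.IsHermitian) : (S - (⨅ j, hS.eigenvalues j) • 1).PosSemidef := by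
  set lam := ⨅ j, hS.eigenvalues j with hlam
  set U : Matrix n n ℝ := (hS.eigenvectorUnitary : Matrix n n ℝ) with hU
  have hUU : U * Uᴴ = 1 := mem_unitaryGroup_iff.mp hS.eigenvectorUnitary.2
  have key : S - lam • 1 = U * diagonal (fun j => hS.eigenvalues j - lam) * Uᴴ := by
    have h1 : S = U * diagonal (RCLike.ofReal ∘ hS.eigenvalues) * (star U) := hS.spectral_theorem
    have h2 : (lam • 1 : Matrix n n ℝ) = U * (lam • 1) * Uᴴ := by
      rw [mul_smul_comm, smul_mul_assoc, mul_one, hUU]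
    have h3 : diagonal (RCLike.ofReal ∘ hS.eigenvalues) - lam • (1 : Matrix n n ℝ)
        = diagonal (fun j => hS.eigenvalues j - lam) := by
      ext j k
      rcases eq_or_ne j k with rfl | h
      · simp [diagonal_apply_eq]
      · simp [diagonal_apply_ne _ h, one_apply_ne h]
    calc S - lam • 1
        = U * diagonal (RCLike.ofReal ∘ hS.eigenvalues) * Uᴴ - U * (lam • 1) * Uᴴ := by
          conv_lhs => rw [h1]
          rw [← h2, star_eq_conjTranspose]
      _ = U * (diagonal (RCLike.ofReal ∘ hS.eigenvalues) - lam • 1) * Uᴴ := by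
          rw [mul_sub, sub_mul]
      _ = U * diagonal (fun j => hS.eigenvalues j - lam) * Uᴴ := by rw [h3]
  rw [key]
  refine PosSemidef.mul_mul_conjTranspose_same ?_ U
  refine posSemidef_diagonal_iff.mpr fun j => ?_
  simp only [sub_nonneg, hlam]
  exact ciInf_le (Set.finite_range _).bddBelow j

private theorem lemB {n : Type*} [Fintype n] [DecidableEq n] (A : Matrix n n ℝ) (hsym : Aᵀ = A)
    (hdet : IsUnit A.det) (i : n) (t : ℝ) :
    (A + diagonal (Pi.single i t)).det = A.det * (1 + t * A⁻¹ i i) := by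
  have hupd : A + diagonal (Pi.single i t)
      = A.updateCol i (fun j => A j i + t * (Pi.single i 1 : n → ℝ) j) := by
    ext j k
    rcases eq_or_ne k i with rfl | hk
    · rcases eq_or_ne j k with rfl | hj
      · simp [updateCol_apply]
      · simp [updateCol_apply, diagonal_apply_ne _ hj, Pi.single_apply, hj]
    · rcases eq_or_ne j k with rfl | hj
      · simp [updateCol_apply, hk, Pi.single_apply, Ne.symm hk]
      · simp [updateCol_apply, hk, diagonal_apply_ne _ hj]
  have hadj : (A.updateCol i ((Pi.single i 1 : n → ℝ))).det = A.adjugate i i := by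
    rw [adjugate_apply, ← det_transpose, ← updateRow_transpose, hsym]
  have hadj2 : A.adjugate i i = A.det * A⁻¹ i i := by
    rw [inv_def, Matrix.smul_apply, Ring.inverse_eq_inv', smul_eq_mul, ← mul_assoc,
      mul_inv_cancel₀ (by exact_mod_cast hdet.ne_zero), one_mul]
  rw [hupd]
  have h1 : (fun j => A j i + t * (Pi.single i 1 : n → ℝ) j)
      = (fun j => A j i) + fun j => t * (Pi.single i 1 : n → ℝ) j := rfl
  rw [h1, det_updateCol_add]
  have h2 : (fun j => t * (Pi.single i 1 : n → ℝ) j) = t • (Pi.single i 1 : n → ℝ) := rfl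
  rw [h2, det_updateCol_smul, updateCol_eq_self, hadj, hadj2]
  ring

theorem lemStep {n : Type*} [Fintype n] [DecidableEq n] (S : Matrix n n ℝ) (hS : S.PosDef)
    (lam : ℝ) (hlam : 0 < lam)
    (hquad : ∀ x : n → ℝ, lam * ∑ j, x j ^ 2 ≤ x ⬝ᵥ S *ᵥ x)
    (u : n → ℝ) (hu : ∀ j, 0 ≤ u j) (i : n) (t : ℝ) (ht : 0 ≤ t) :
    Real.log (S + diagonal (u + Pi.single i t)).det - Real.log (S + diagonal u).det
      ≤ Real.log (1 + t / (lam + u i)) := by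
  have hA : (S + diagonal u).PosDef :=
    hS.add_posSemidef (PosSemidef.diagonal (fun j => hu j))
  set A := S + diagonal u with hAdef
  have hdet : 0 < A.det := hA.det_pos
  have hdetu : IsUnit A.det := isUnit_iff_ne_zero.mpr hdet.ne'
  have hsym : Aᵀ = A := by
    ext j k
    have := congrFun (congrFun hA.1 j) k
    simpa [conjTranspose_apply] using this
  have hpos : 0 < lam + u i := add_pos_of_pos_of_nonneg hlam (hu i)
  set c := A⁻¹ i i with hc
  set x : n → ℝ := A⁻¹ *ᵥ Pi.single i 1 with hx
  have hxi : x i = c := by simp [hx, mulVec_single, hc]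
  have hAx : A *ᵥ x = Pi.single i 1 := by
    rw [hx, mulVec_mulVec, mul_nonsing_inv _ hdetu, one_mulVec]
  have hxAx : x ⬝ᵥ A *ᵥ x = c := by
    rw [hAx, dotProduct_single, mul_one, hxi]
  have hcpos : 0 < c := by
    have h1 : (0:ℝ) < star (Pi.single i 1 : n → ℝ) ⬝ᵥ A⁻¹ *ᵥ (Pi.single i 1 : n → ℝ) :=
      hA.inv.dotProduct_mulVec_pos (by intro h; have := congrFun h i; simp at this)
    simpa [star_trivial, single_dotProduct, hxi, hc, mulVec_single] using h1
  -- quadratic bound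
  have hdiag : x ⬝ᵥ diagonal u *ᵥ x = ∑ j, u j * x j ^ 2 := by
    simp [dotProduct, mulVec_diagonal]
    exact Finset.sum_congr rfl fun j _ => by ring
  have hlb : (lam + u i) * c ^ 2 ≤ c := by
    have h1 : lam * ∑ j, x j ^ 2 ≤ x ⬝ᵥ S *ᵥ x := hquad x
    have h2 : x ⬝ᵥ A *ᵥ x = x ⬝ᵥ S *ᵥ x + ∑ j, u j * x j ^ 2 := by
      rw [hAdef, add_mulVec, dotProduct_add, hdiag]
    have h3 : x i ^ 2 ≤ ∑ j, x j ^ 2 :=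
      Finset.single_le_sum (f := fun j => x j ^ 2) (fun j _ => sq_nonneg _) (Finset.mem_univ i)
    have h4 : u i * x i ^ 2 ≤ ∑ j, u j * x j ^ 2 :=
      Finset.single_le_sum (f := fun j => u j * x j ^ 2) (fun j _ => mul_nonneg (hu j) (sq_nonneg _)) (Finset.mem_univ i)
    have h5 : lam * x i ^ 2 ≤ lam * ∑ j, x j ^ 2 := mul_le_mul_of_nonneg_left h3 hlam.le
    rw [← hxi]
    nlinarith [h5, h1, h2, h4, hxAx]
  have hcle : c ≤ (lam + u i)⁻¹ := by
    have h5 : c * (lam + u i) ≤ 1 := by nlinarith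
    calc c = c * (lam + u i) * (lam + u i)⁻¹ := by field_simp
      _ ≤ 1 * (lam + u i)⁻¹ := mul_le_mul_of_nonneg_right h5 (inv_nonneg.mpr hpos.le)
      _ = (lam + u i)⁻¹ := one_mul _
  -- determinant identity
  have hdiagadd : diagonal (u + Pi.single i t) = diagonal u + diagonal (Pi.single i t) :=
    (diagonal_add _ _).symm
  have hdet2 : (S + diagonal (u + Pi.single i t)).det = A.det * (1 + t * c) := by
    rw [hdiagadd, ← add_assoc, ← hAdef, lemB A hsym hdetu i t, hc]
  have h1tc : 0 < 1 + t * c := by positivity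
  rw [hdet2, Real.log_mul hdet.ne' h1tc.ne', add_sub_cancel_left]
  apply Real.log_le_log h1tc
  have : t * c ≤ t * (lam + u i)⁻¹ := mul_le_mul_of_nonneg_left hcle ht
  rw [div_eq_mul_inv]
  linarith

/-- Growth bound for the log-determinant along diagonal increments:
for `Σ` positive definite and `0 ≤ v ≤ w` componentwise,
`log det(Σ + diag w) − log det(Σ + diag v) ≤ Σ_i log(1 + (w_i − v_i)/(λ_min(Σ) + v_i))`. -/
theorem stmt_17 (m : ℕ) (S : Matrix (Fin m) (Fin m) ℝ) (hS : S.PosDef)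
    (v w : Fin m → ℝ) (hv : ∀ i, 0 ≤ v i) (hw : ∀ i, 0 ≤ w i) (hvw : ∀ i, v i ≤ w i) :
    Real.log ((S + Matrix.diagonal w).det) - Real.log ((S + Matrix.diagonal v).det)
      ≤ ∑ i, Real.log (1 + (w i - v i) / ((⨅ j, hS.1.eigenvalues j) + v i)) := by
  rcases Nat.eq_zero_or_pos m with rfl | hm
  · simp [Matrix.det_fin_zero]
  haveI : Nonempty (Fin m) := ⟨⟨0, hm⟩⟩
  set lam := ⨅ j, hS.1.eigenvalues j with hlamdef
  have hlam : 0 < lam := by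
    obtain ⟨j0, hj0⟩ := Finite.exists_min hS.1.eigenvalues
    exact lt_of_lt_of_le (hS.eigenvalues_pos j0) (le_ciInf hj0)
  have hquad : ∀ x : Fin m → ℝ, lam * ∑ j, x j ^ 2 ≤ x ⬝ᵥ S *ᵥ x := by
    intro x
    have h := (lemA hS.1).dotProduct_mulVec_nonneg x
    have hexp : star x ⬝ᵥ (S - lam • 1) *ᵥ x = x ⬝ᵥ S *ᵥ x - lam * ∑ j, x j ^ 2 := by
      rw [sub_mulVec, dotProduct_sub, smul_mulVec, one_mulVec, dotProduct_smul,
        star_trivial]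
      congr 1
      rw [smul_eq_mul]
      congr 1
      simp [dotProduct, pow_two]
    rw [hexp] at h
    linarith
  have claim : ∀ k, k ≤ m →
      Real.log (S + diagonal (fun j : Fin m => if (j : ℕ) < k then w j else v j)).det
          - Real.log (S + diagonal v).det
        ≤ ∑ i : Fin m, if (i : ℕ) < k
            then Real.log (1 + (w i - v i) / (lam + v i)) else 0 := by
    intro k
    induction k with
    | zero =>
      intro _
      simp
    | succ k ih =>
      intro hk1
      have hk : k < m := hk1
      set i₀ : Fin m := ⟨k, hk⟩ with hi₀
      have hik : (i₀ : ℕ) = k := rfl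
      have hrec := ih hk.le
      set uk : Fin m → ℝ := fun j : Fin m => if (j : ℕ) < k then w j else v j with huk
      have huknn : ∀ j, 0 ≤ uk j := by
        intro j; simp only [huk]; split <;> [exact hw j; exact hv j]
      have huki : uk i₀ = v i₀ := by simp [huk, hik]
      have hsucc : (fun j : Fin m => if (j : ℕ) < k + 1 then w j else v j)
          = uk + (Pi.single i₀ (w i₀ - v i₀) : Fin m → ℝ) := by
        funext j
        simp only [huk, Pi.add_apply, Pi.single_apply]
        rcases lt_trichotomy (j : ℕ) k with hj | hj | hj
        · have h2 : j ≠ i₀ := fun he => by rw [he] at hj; omega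
          simp [show (j : ℕ) < k + 1 by omega, hj, h2]
        · have h2 : j = i₀ := Fin.ext (hj.trans hik.symm)
          rw [if_pos (show (j : ℕ) < k + 1 by omega), if_neg (show ¬ (j : ℕ) < k by omega),
            h2, if_pos rfl]
          ring
        · have h2 : j ≠ i₀ := fun he => by rw [he] at hj; omega
          simp [show ¬ (j : ℕ) < k + 1 by omega, show ¬ (j : ℕ) < k by omega, h2]
      have hstep := lemStep S hS lam hlam hquad uk huknn i₀ (w i₀ - v i₀)
        (sub_nonneg.mpr (hvw i₀))
      rw [huki] at hstep
      have hsum : (∑ i : Fin m, if (i : ℕ) < k + 1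
            then Real.log (1 + (w i - v i) / (lam + v i)) else 0)
          = (∑ i : Fin m, if (i : ℕ) < k
            then Real.log (1 + (w i - v i) / (lam + v i)) else 0)
            + Real.log (1 + (w i₀ - v i₀) / (lam + v i₀)) := by
        have key : ∀ i : Fin m,
            (if (i : ℕ) < k + 1 then Real.log (1 + (w i - v i) / (lam + v i)) else 0)
              = (if (i : ℕ) < k then Real.log (1 + (w i - v i) / (lam + v i)) else 0)
                + (if i = i₀ then Real.log (1 + (w i - v i) / (lam + v i)) else 0) := by
          intro i
          rcases lt_trichotomy (i : ℕ) k with h | h | h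
          · have h2 : i ≠ i₀ := fun he => by rw [he] at h; omega
            simp [show (i : ℕ) < k + 1 by omega, h, h2]
          · have h2 : i = i₀ := Fin.ext (h.trans hik.symm)
            simp [show (i : ℕ) < k + 1 by omega, show ¬ (i : ℕ) < k by omega, h2, hik]
          · have h2 : i ≠ i₀ := fun he => by rw [he] at h; omega
            simp [show ¬ (i : ℕ) < k + 1 by omega, show ¬ (i : ℕ) < k by omega, h2]
        rw [Finset.sum_congr rfl (fun i _ => key i), Finset.sum_add_distrib,
          Finset.sum_ite_eq' Finset.univ i₀]
        simp
      rw [hsucc, hsum]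
      linarith
  have hw' : (fun j : Fin m => if (j : ℕ) < m then w j else v j) = w := by
    funext j; simp [j.isLt]
  have hsum' : (∑ i : Fin m, if (i : ℕ) < m
        then Real.log (1 + (w i - v i) / (lam + v i)) else 0)
      = ∑ i, Real.log (1 + (w i - v i) / (lam + v i)) :=
    Finset.sum_congr rfl fun i _ => if_pos i.isLt
  have := claim m le_rfl
  rw [hw', hsum'] at this
  exact this
end
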